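/- arXiv:2402.01211 — 4 statements merged into one kernel-verified Lean document; each statement's English description precedes it below -/
import Mathlib

section
/- Let H be a separable real Hilbert space, T > 0, and let (f_n)_{n∈ℕ} be a sequence of càdlàg functions f_n : [0,T] → H converging uniformly on [0,T] to a (necessarily càdlàg) function f : [0,T] → H. Let k : H → ℝ be continuous, nonnegative, bounded, and vanishing in a neighbourhood of 0, i.e. there is δ > 0 with k(h) = 0 whenever ‖h‖ < δ. For a càdlàg g : [0,T] → H define the jump sum S_g(t) := Σ_{0 < s ≤ t} k(g(s) − g(s−)) (a finite sum, since only finitely many jumps have size ≥ δ). Then lim_{n→∞} sup_{t ∈ [0,T]} | S_{f_n}(t) − S_f(t) | = 0. -/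
open Filter
open scoped Topology

/-- If two functions are uniformly `ε`-close on `[0,T]`, then their left limits at any
point of `(0,T]` are `ε`-close. -/
lemma left_limit_dist_le {H : Type*} [NormedAddCommGroup H] {T ε : ℝ}
    {g G : ℝ → H} {gl Gl : ℝ → H}
    (hg : ∀ t ∈ Set.Ioc (0 : ℝ) T, Tendsto g (nhdsWithin t (Set.Iio t)) (𝓝 (gl t)))
    (hG : ∀ t ∈ Set.Ioc (0 : ℝ) T, Tendsto G (nhdsWithin t (Set.Iio t)) (𝓝 (Gl t)))
    (hb : ∀ x ∈ Set.Icc (0 : ℝ) T, dist (g x) (G x) ≤ ε)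
    {s : ℝ} (hs : s ∈ Set.Ioc (0 : ℝ) T) : dist (gl s) (Gl s) ≤ ε := by
  have h1 : Tendsto (fun u => dist (g u) (G u)) (nhdsWithin s (Set.Iio s))
      (𝓝 (dist (gl s) (Gl s))) := (hg s hs).dist (hG s hs)
  refine le_of_tendsto h1 ?_
  filter_upwards [Ioo_mem_nhdsLT_of_mem (show s ∈ Set.Ioc (0 : ℝ) s from ⟨hs.1, le_rfl⟩)]
    with u hu
  exact hb u ⟨hu.1.le, hu.2.le.trans hs.2⟩

/-- A càdlàg function has only finitely many jumps of norm at least `c > 0` on `(0,T]`. -/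
lemma jump_set_finite {H : Type*} [NormedAddCommGroup H] {T : ℝ}
    (F Fl : ℝ → H)
    (hFright : ∀ t ∈ Set.Ico (0 : ℝ) T,
      Tendsto F (nhdsWithin t (Set.Ioi t)) (𝓝 (F t)))
    (hFleft : ∀ t ∈ Set.Ioc (0 : ℝ) T,
      Tendsto F (nhdsWithin t (Set.Iio t)) (𝓝 (Fl t)))
    {c : ℝ} (hc : 0 < c) :
    {s ∈ Set.Ioc (0 : ℝ) T | c ≤ ‖F s - Fl s‖}.Finite := by
  set J := {s ∈ Set.Ioc (0 : ℝ) T | c ≤ ‖F s - Fl s‖} with hJdef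
  by_contra hfin
  have hJinf : J.Infinite := hfin
  let u : ℕ → ℝ := fun n => (Set.Infinite.natEmbedding J hJinf n : ℝ)
  have huJ : ∀ n, u n ∈ J := fun n => (Set.Infinite.natEmbedding J hJinf n).2
  have huinj : Function.Injective u :=
    Subtype.coe_injective.comp (Set.Infinite.natEmbedding J hJinf).injective
  have hJsub : J ⊆ Set.Icc (0 : ℝ) T := fun s hs => ⟨hs.1.1.le, hs.1.2⟩
  have hle : Filter.map u atTop ≤ 𝓟 (Set.Icc (0 : ℝ) T) := by
    rw [Filter.le_principal_iff, Filter.mem_map]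
    exact Filter.univ_mem' fun n => hJsub (huJ n)
  obtain ⟨x, hxIcc, hxcl⟩ := isCompact_Icc.exists_clusterPt hle
  have hJmem : J ∈ Filter.map u atTop := Filter.mem_map.mpr (Filter.univ_mem' fun n => huJ n)
  have hnex : ({x}ᶜ : Set ℝ) ∈ Filter.map u atTop := by
    rw [Filter.mem_map, ← Nat.cofinite_eq_atTop]
    have : (u ⁻¹' {x}).Finite := Set.Finite.preimage huinj.injOn (Set.finite_singleton x)
    simpa [Set.preimage_compl] using this.compl_mem_cofinite
  have hcl' : (𝓝[≠] x ⊓ 𝓟 J).NeBot := by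
    refine Filter.NeBot.mono hxcl ?_
    refine le_inf (le_inf inf_le_left ?_) ?_
    · exact le_trans inf_le_right (Filter.le_principal_iff.mpr hnex)
    · exact le_trans inf_le_right (Filter.le_principal_iff.mpr hJmem)
  have hsplit : (𝓝[<] x ⊓ 𝓟 J).NeBot ∨ (𝓝[>] x ⊓ 𝓟 J).NeBot := by
    by_contra h
    push_neg at h
    obtain ⟨h1, h2⟩ := h
    rw [Filter.inf_principal_eq_bot] at h1 h2
    have : Jᶜ ∈ 𝓝[≠] x := by
      rw [← nhdsLT_sup_nhdsGT]
      exact Filter.mem_sup.mpr ⟨h1, h2⟩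
    exact hcl'.ne (Filter.inf_principal_eq_bot.mpr this)
  rcases hsplit with hL | hL
  · -- accumulation from the left
    set L := 𝓝[<] x ⊓ 𝓟 J with hLdef
    haveI : L.NeBot := hL
    have hJL : J ∈ L := Filter.mem_inf_of_right (Filter.mem_principal_self J)
    have hIio : Set.Iio x ∈ L := Filter.mem_inf_of_left self_mem_nhdsWithin
    obtain ⟨s₀, hs₀J, hs₀x⟩ := (Filter.eventually_of_mem hJL (fun s hs => hs)).and
      (Filter.eventually_of_mem hIio (fun s hs => hs)) |>.exists
    have hx0 : 0 < x := lt_trans hs₀J.1.1 hs₀x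
    have hFx : Tendsto F (nhdsWithin x (Set.Iio x)) (𝓝 (Fl x)) :=
      hFleft x ⟨hx0, hxIcc.2⟩
    have hFlL : Tendsto Fl L (𝓝 (Fl x)) := by
      rw [Metric.tendsto_nhds]
      intro ε hε
      have hev2 : ∀ᶠ v in 𝓝[<] x, dist (F v) (Fl x) < ε / 2 :=
        (Metric.tendsto_nhds.mp hFx) (ε / 2) (half_pos hε)
      obtain ⟨b, hbx, hIoo⟩ := mem_nhdsLT_iff_exists_Ioo_subset.mp hev2
      have hmemL : Set.Ioo b x ∩ J ∈ L :=
        Filter.inter_mem (Filter.mem_inf_of_left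
          (Ioo_mem_nhdsLT_of_mem ⟨hbx, le_rfl⟩)) hJL
      filter_upwards [hmemL] with s hs
      obtain ⟨hsIoo, hsJ⟩ := hs
      have hFls : Tendsto F (nhdsWithin s (Set.Iio s)) (𝓝 (Fl s)) := hFleft s hsJ.1
      have hdle : dist (Fl s) (Fl x) ≤ ε / 2 := by
        refine le_of_tendsto (hFls.dist tendsto_const_nhds) ?_
        filter_upwards [Ioo_mem_nhdsLT_of_mem
          (show s ∈ Set.Ioc b s from ⟨hsIoo.1, le_rfl⟩)] with v hv
        exact (hIoo ⟨hv.1, hv.2.trans hsIoo.2⟩).le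
      exact lt_of_le_of_lt hdle (half_lt_self hε)
    have hFL : Tendsto F L (𝓝 (Fl x)) := hFx.mono_left inf_le_left
    have hnorm : Tendsto (fun s => ‖F s - Fl s‖) L (𝓝 0) := by
      have := (hFL.sub hFlL).norm
      simpa using this
    have h1 : ∀ᶠ s in L, ‖F s - Fl s‖ < c := hnorm.eventually_lt_const hc
    have h2 : ∀ᶠ s in L, c ≤ ‖F s - Fl s‖ :=
      Filter.eventually_of_mem hJL fun s hs => hs.2
    obtain ⟨s, hs1, hs2⟩ := (h1.and h2).exists
    linarith
  · -- accumulation from the right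
    set L := 𝓝[>] x ⊓ 𝓟 J with hLdef
    haveI : L.NeBot := hL
    have hJL : J ∈ L := Filter.mem_inf_of_right (Filter.mem_principal_self J)
    have hIoi : Set.Ioi x ∈ L := Filter.mem_inf_of_left self_mem_nhdsWithin
    obtain ⟨s₀, hs₀J, hs₀x⟩ := (Filter.eventually_of_mem hJL (fun s hs => hs)).and
      (Filter.eventually_of_mem hIoi (fun s hs => hs)) |>.exists
    have hxT : x < T := lt_of_lt_of_le hs₀x hs₀J.1.2
    have hFx : Tendsto F (nhdsWithin x (Set.Ioi x)) (𝓝 (F x)) :=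
      hFright x ⟨hxIcc.1, hxT⟩
    have hFlL : Tendsto Fl L (𝓝 (F x)) := by
      rw [Metric.tendsto_nhds]
      intro ε hε
      have hev2 : ∀ᶠ v in 𝓝[>] x, dist (F v) (F x) < ε / 2 :=
        (Metric.tendsto_nhds.mp hFx) (ε / 2) (half_pos hε)
      obtain ⟨b, hbx, hIoo⟩ := mem_nhdsGT_iff_exists_Ioo_subset.mp hev2
      have hmemL : Set.Ioo x b ∩ J ∈ L :=
        Filter.inter_mem (Filter.mem_inf_of_left
          (Ioo_mem_nhdsGT_of_mem ⟨le_rfl, hbx⟩)) hJL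
      filter_upwards [hmemL] with s hs
      obtain ⟨hsIoo, hsJ⟩ := hs
      have hFls : Tendsto F (nhdsWithin s (Set.Iio s)) (𝓝 (Fl s)) := hFleft s hsJ.1
      have hdle : dist (Fl s) (F x) ≤ ε / 2 := by
        refine le_of_tendsto (hFls.dist tendsto_const_nhds) ?_
        filter_upwards [Ioo_mem_nhdsLT_of_mem
          (show s ∈ Set.Ioc x s from ⟨hsIoo.1, le_rfl⟩)] with v hv
        exact (hIoo ⟨hv.1, hv.2.trans hsIoo.2⟩).le
      exact lt_of_le_of_lt hdle (half_lt_self hε)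
    have hFL : Tendsto F L (𝓝 (F x)) := hFx.mono_left inf_le_left
    have hnorm : Tendsto (fun s => ‖F s - Fl s‖) L (𝓝 0) := by
      have := (hFL.sub hFlL).norm
      simpa using this
    have h1 : ∀ᶠ s in L, ‖F s - Fl s‖ < c := hnorm.eventually_lt_const hc
    have h2 : ∀ᶠ s in L, c ≤ ‖F s - Fl s‖ :=
      Filter.eventually_of_mem hJL fun s hs => hs.2
    obtain ⟨s, hs1, hs2⟩ := (h1.and h2).exists
    linarith

/-- **Uniform convergence of jump sums (Lemma 3.3).**
Let `H` be a separable real Hilbert space, `T > 0`, and let `f n : [0,T] → H` be càdlàg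
functions (with left limits `fl n`) converging uniformly on `[0,T]` to the càdlàg
function `F` (with left limits `Fl`). Let `k : H → ℝ` be continuous, nonnegative,
bounded, and vanishing in a neighbourhood of `0`. Writing
`S g gl t := ∑_{0 < s ≤ t} k (g s - gl s)` for the jump sum (a finite sum, realised
here as a `tsum`), we have `sup_{t ∈ [0,T]} |S (f n) (fl n) t - S F Fl t| → 0`. -/
theorem jump_sums_tendsto_uniformly_of_tendstoUniformly
    {H : Type*} [NormedAddCommGroup H] [InnerProductSpace ℝ H] [CompleteSpace H]
    [SecondCountableTopology H]
    (T : ℝ) (hT : 0 < T)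
    (f : ℕ → ℝ → H) (fl : ℕ → ℝ → H) (F : ℝ → H) (Fl : ℝ → H)
    (hright : ∀ n, ∀ t ∈ Set.Ico (0 : ℝ) T,
      Tendsto (f n) (nhdsWithin t (Set.Ioi t)) (𝓝 (f n t)))
    (hleft : ∀ n, ∀ t ∈ Set.Ioc (0 : ℝ) T,
      Tendsto (f n) (nhdsWithin t (Set.Iio t)) (𝓝 (fl n t)))
    (hFright : ∀ t ∈ Set.Ico (0 : ℝ) T,
      Tendsto F (nhdsWithin t (Set.Ioi t)) (𝓝 (F t)))
    (hFleft : ∀ t ∈ Set.Ioc (0 : ℝ) T,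
      Tendsto F (nhdsWithin t (Set.Iio t)) (𝓝 (Fl t)))
    (hunif : TendstoUniformlyOn f F atTop (Set.Icc 0 T))
    (k : H → ℝ) (hk_cont : Continuous k) (hk_nonneg : ∀ h, 0 ≤ k h)
    (hk_bdd : ∃ M : ℝ, ∀ h, k h ≤ M)
    (hk_vanish : ∃ δ : ℝ, 0 < δ ∧ ∀ h : H, ‖h‖ < δ → k h = 0) :
    Tendsto
      (fun n : ℕ => ⨆ t : Set.Icc (0 : ℝ) T,
        |(∑' s : Set.Ioc (0 : ℝ) (t : ℝ), k (f n s - fl n s))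
          - ∑' s : Set.Ioc (0 : ℝ) (t : ℝ), k (F s - Fl s)|)
      atTop (𝓝 0) := by
  classical
  obtain ⟨δ, hδ, hk0⟩ := hk_vanish
  have hJfin : {s ∈ Set.Ioc (0 : ℝ) T | δ / 2 ≤ ‖F s - Fl s‖}.Finite :=
    jump_set_finite F Fl hFright hFleft (half_pos hδ)
  set J : Set ℝ := {s ∈ Set.Ioc (0 : ℝ) T | δ / 2 ≤ ‖F s - Fl s‖} with hJdef
  set Jf : Finset ℝ := hJfin.toFinset with hJf
  have hmemJf : ∀ s, s ∈ Jf ↔ s ∈ J := fun s => hJfin.mem_toFinset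
  haveI hne : Nonempty (Set.Icc (0 : ℝ) T) := ⟨⟨0, le_rfl, hT.le⟩⟩
  set A : ℕ → ℝ := fun n => ∑ s ∈ Jf, |k (f n s - fl n s) - k (F s - Fl s)| with hA
  -- `A n → 0`
  have hA0 : Tendsto A atTop (𝓝 0) := by
    have hsum : Tendsto A atTop (𝓝 (∑ s ∈ Jf, (0 : ℝ))) := by
      refine tendsto_finset_sum _ ?_
      intro s hs
      have hsJ : s ∈ J := (hmemJf s).mp hs
      have hs1 : Tendsto (fun n => f n s) atTop (𝓝 (F s)) :=
        hunif.tendsto_at ⟨hsJ.1.1.le, hsJ.1.2⟩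
      have hs2 : Tendsto (fun n => fl n s) atTop (𝓝 (Fl s)) := by
        rw [Metric.tendsto_nhds]
        intro ε hε
        have hclose := (Metric.tendstoUniformlyOn_iff.mp hunif) (ε / 2) (half_pos hε)
        filter_upwards [hclose] with n hn
        have hb : dist (Fl s) (fl n s) ≤ ε / 2 :=
          left_limit_dist_le hFleft (hleft n) (fun x hx => (hn x hx).le) hsJ.1
        calc dist (fl n s) (Fl s) = dist (Fl s) (fl n s) := dist_comm _ _
          _ ≤ ε / 2 := hb
          _ < ε := half_lt_self hε
      have hΔ : Tendsto (fun n => f n s - fl n s) atTop (𝓝 (F s - Fl s)) := hs1.sub hs2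
      have hk' : Tendsto (fun n => k (f n s - fl n s)) atTop (𝓝 (k (F s - Fl s))) :=
        (hk_cont.tendsto _).comp hΔ
      have habs : Tendsto (fun m => |k (f m s - fl m s) - k (F s - Fl s)|) atTop
          (𝓝 |k (F s - Fl s) - k (F s - Fl s)|) :=
        (hk'.sub (tendsto_const_nhds (x := k (F s - Fl s)))).abs
      simpa using habs
    simpa using hsum
  -- eventual bound by `A n`
  have hev : ∀ᶠ n in atTop, ∀ t : Set.Icc (0 : ℝ) T,
      |(∑' s : Set.Ioc (0 : ℝ) (t : ℝ), k (f n s - fl n s))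
        - ∑' s : Set.Ioc (0 : ℝ) (t : ℝ), k (F s - Fl s)| ≤ A n := by
    have hclose := (Metric.tendstoUniformlyOn_iff.mp hunif) (δ / 8) (by positivity)
    filter_upwards [hclose] with n hn
    have hlb : ∀ s ∈ Set.Ioc (0 : ℝ) T, dist (Fl s) (fl n s) ≤ δ / 8 := fun s hs =>
      left_limit_dist_le hFleft (hleft n) (fun x hx => (hn x hx).le) hs
    have hjd : ∀ s ∈ Set.Ioc (0 : ℝ) T,
        ‖(f n s - fl n s) - (F s - Fl s)‖ ≤ δ / 4 := by
      intro s hs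
      have h1 : ‖f n s - F s‖ ≤ δ / 8 := by
        have h := (hn s ⟨hs.1.le, hs.2⟩).le
        rw [dist_eq_norm] at h
        calc ‖f n s - F s‖ = ‖F s - f n s‖ := norm_sub_rev _ _
          _ ≤ δ / 8 := h
      have h2 : ‖Fl s - fl n s‖ ≤ δ / 8 := by
        rw [← dist_eq_norm]; exact hlb s hs
      have heq : (f n s - fl n s) - (F s - Fl s) = (f n s - F s) + (Fl s - fl n s) := by
        abel
      rw [heq]
      calc ‖(f n s - F s) + (Fl s - fl n s)‖ ≤ ‖f n s - F s‖ + ‖Fl s - fl n s‖ :=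
            norm_add_le _ _
        _ ≤ δ / 8 + δ / 8 := add_le_add h1 h2
        _ ≤ δ / 4 := by linarith
    have hfsupp : ∀ b ∈ Set.Ioc (0 : ℝ) T, b ∉ Jf → k (f n b - fl n b) = 0 := by
      intro b hb hbJ
      rw [hmemJf] at hbJ
      have hFb : ‖F b - Fl b‖ < δ / 2 := by
        by_contra hcon
        exact hbJ ⟨hb, le_of_not_gt hcon⟩
      apply hk0
      have htri : ‖f n b - fl n b‖ ≤ ‖(f n b - fl n b) - (F b - Fl b)‖ + ‖F b - Fl b‖ := by
        calc ‖f n b - fl n b‖ = ‖((f n b - fl n b) - (F b - Fl b)) + (F b - Fl b)‖ := by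
              congr 1; abel
          _ ≤ _ := norm_add_le _ _
      have := hjd b hb
      linarith
    intro t
    have e1 : (∑' s : Set.Ioc (0 : ℝ) (t : ℝ), k (f n s - fl n s))
        = ∑ s ∈ Jf, Set.indicator (Set.Ioc (0 : ℝ) (t : ℝ))
            (fun s => k (f n s - fl n s)) s := by
      refine (tsum_subtype (Set.Ioc (0 : ℝ) (t : ℝ))
        (fun s => k (f n s - fl n s))).trans (tsum_eq_sum ?_)
      intro b hb
      by_cases hbt : b ∈ Set.Ioc (0 : ℝ) (t : ℝ)
      · rw [Set.indicator_of_mem hbt]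
        exact hfsupp b ⟨hbt.1, hbt.2.trans t.2.2⟩ hb
      · exact Set.indicator_of_notMem hbt _
    have e2 : (∑' s : Set.Ioc (0 : ℝ) (t : ℝ), k (F s - Fl s))
        = ∑ s ∈ Jf, Set.indicator (Set.Ioc (0 : ℝ) (t : ℝ))
            (fun s => k (F s - Fl s)) s := by
      refine (tsum_subtype (Set.Ioc (0 : ℝ) (t : ℝ))
        (fun s => k (F s - Fl s))).trans (tsum_eq_sum ?_)
      intro b hb
      by_cases hbt : b ∈ Set.Ioc (0 : ℝ) (t : ℝ)
      · rw [Set.indicator_of_mem hbt]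
        apply hk0
        rw [hmemJf] at hb
        have : ¬ δ / 2 ≤ ‖F b - Fl b‖ := fun hcon =>
          hb ⟨⟨hbt.1, hbt.2.trans t.2.2⟩, hcon⟩
        linarith [lt_of_not_ge this]
      · exact Set.indicator_of_notMem hbt _
    rw [e1, e2, ← Finset.sum_sub_distrib]
    refine (Finset.abs_sum_le_sum_abs _ _).trans (Finset.sum_le_sum ?_)
    intro s hs
    by_cases hst : s ∈ Set.Ioc (0 : ℝ) (t : ℝ)
    · rw [Set.indicator_of_mem hst, Set.indicator_of_mem hst]
    · rw [Set.indicator_of_notMem hst, Set.indicator_of_notMem hst]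
      simpa using abs_nonneg _
  refine squeeze_zero' ?_ ?_ hA0
  · filter_upwards [hev] with n hn
    have hbdd : BddAbove (Set.range fun t : Set.Icc (0 : ℝ) T =>
        |(∑' s : Set.Ioc (0 : ℝ) (t : ℝ), k (f n s - fl n s))
          - ∑' s : Set.Ioc (0 : ℝ) (t : ℝ), k (F s - Fl s)|) := by
      refine ⟨A n, ?_⟩
      rintro _ ⟨t, rfl⟩
      exact hn t
    exact le_trans (abs_nonneg _) (le_ciSup hbdd ⟨0, le_rfl, hT.le⟩)
  · filter_upwards [hev] with n hn
    exact ciSup_le hn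
end

section
/- Let H be a separable real Hilbert space and let μ be a Borel measure on H with μ({0}) = 0 satisfying, for some constant C ≥ 0, the moment bounds ∫_{{g : ‖g‖ ≤ 1}} ‖g‖² dμ(g) ≤ C and ∫_{{g : ‖g‖ > 1}} ‖g‖ dμ(g) ≤ C. Let f : H → ℝ be twice continuously Fréchet differentiable with ‖Df(x)‖ ≤ a and ‖D²f(x)‖ ≤ b for all x ∈ H. Then for every h ∈ H, ∫_H | f(h+g) − f(h) − ⟨Df(h), g⟩ | dμ(g) ≤ C · (2a + b/2). -/
open MeasureTheory
open scoped ENNReal RealInnerProductSpace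

/-- **Taylor-remainder integral estimate (Lemma 5.2).**
Let `H` be a separable real Hilbert space and `μ` a Borel measure on `H` with
`μ {0} = 0`, `∫_{‖g‖ ≤ 1} ‖g‖² dμ ≤ C` and `∫_{‖g‖ > 1} ‖g‖ dμ ≤ C`. If `f : H → ℝ`
is twice continuously Fréchet differentiable with `‖Df(x)‖ ≤ a` and `‖D²f(x)‖ ≤ b`
for all `x`, then for every `h ∈ H`,
`∫_H |f(h+g) - f(h) - ⟪Df(h), g⟫| dμ(g) ≤ C * (2a + b/2)`. -/
theorem taylor_remainder_integral_le
    {H : Type*} [NormedAddCommGroup H] [InnerProductSpace ℝ H] [CompleteSpace H]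
    [SecondCountableTopology H] [MeasurableSpace H] [BorelSpace H]
    (μ : Measure H) (hzero : μ {0} = 0)
    (C : ℝ) (hC : 0 ≤ C)
    (hsmall : ∫⁻ g in {g : H | ‖g‖ ≤ 1}, ENNReal.ofReal (‖g‖ ^ 2) ∂μ ≤ ENNReal.ofReal C)
    (hbig : ∫⁻ g in {g : H | 1 < ‖g‖}, ENNReal.ofReal ‖g‖ ∂μ ≤ ENNReal.ofReal C)
    (f : H → ℝ) (hf : ContDiff ℝ 2 f)
    (a b : ℝ)
    (ha : ∀ x : H, ‖gradient f x‖ ≤ a)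
    (hb : ∀ x : H, ‖fderiv ℝ (fderiv ℝ f) x‖ ≤ b) :
    ∀ h : H,
      ∫⁻ g, ENNReal.ofReal |f (h + g) - f h - ⟪gradient f h, g⟫| ∂μ
        ≤ ENNReal.ofReal (C * (2 * a + b / 2)) := by
  intro h
  set L := fderiv ℝ f with hLdef
  have hfd : Differentiable ℝ f := hf.differentiable (by norm_num)
  have hLc : ContDiff ℝ 1 L := hf.fderiv_right (by norm_num)
  have hLd : Differentiable ℝ L := hLc.differentiable (by norm_num)
  have ha0 : 0 ≤ a := le_trans (norm_nonneg _) (ha 0)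
  have hb0 : 0 ≤ b := le_trans (ContinuousLinearMap.opNorm_nonneg _) (hb 0)
  have hnormL : ∀ x : H, ‖L x‖ ≤ a := by
    intro x
    have : ‖gradient f x‖ = ‖L x‖ := by
      rw [gradient]; exact (InnerProductSpace.toDual ℝ H).symm.norm_map _
    rw [← this]; exact ha x
  have hinner : ∀ g : H, ⟪gradient f h, g⟫ = L h g := by
    intro g
    rw [gradient]
    exact InnerProductSpace.toDual_symm_apply
  -- Lipschitz bound on L
  have hLip : ∀ x y : H, ‖L x - L y‖ ≤ b * ‖x - y‖ := fun x y =>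
    Convex.norm_image_sub_le_of_norm_fderiv_le (fun z _ => hLd z) (fun z _ => hb z)
      convex_univ (Set.mem_univ y) (Set.mem_univ x)
  -- key pointwise Taylor bound
  have key : ∀ g : H, |f (h + g) - f h - L h g| ≤ b / 2 * ‖g‖ ^ 2 := by
    intro g
    have hcurve : ∀ t : ℝ, HasDerivAt (fun t : ℝ => h + t • g) g t := by
      intro t
      have := ((hasDerivAt_id t).smul_const g).const_add h
      simpa using this
    have hψ : ∀ t : ℝ, HasDerivAt (fun t : ℝ => f (h + t • g) - t * L h g)
        (L (h + t • g) g - L h g) t := by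
      intro t
      exact ((hfd _).hasFDerivAt.comp_hasDerivAt t (hcurve t)).sub
        (hasDerivAt_mul_const (L h g))
    have hcont : Continuous fun t : ℝ => L (h + t • g) g - L h g := by
      have : Continuous fun t : ℝ => h + t • g := by continuity
      exact ((hLc.continuous.comp this).clm_apply continuous_const).sub continuous_const
    have hFTC : (∫ t in (0:ℝ)..1, (L (h + t • g) g - L h g)) =
        f (h + g) - f h - L h g := by
      rw [intervalIntegral.integral_eq_sub_of_hasDerivAt (fun t _ => hψ t)
        (hcont.intervalIntegrable 0 1)]
      simp
      ring
    have hbound : ∀ t ∈ Set.uIoc (0:ℝ) 1, |L (h + t • g) g - L h g| ≤ b * ‖g‖ ^ 2 * t := by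
      intro t ht
      rw [Set.uIoc_of_le (by norm_num : (0:ℝ) ≤ 1)] at ht
      have h1 : |L (h + t • g) g - L h g| ≤ ‖L (h + t • g) - L h‖ * ‖g‖ := by
        have := (L (h + t • g) - L h).le_opNorm g
        simpa using this
      have h2 : ‖L (h + t • g) - L h‖ ≤ b * (t * ‖g‖) := by
        have := hLip (h + t • g) h
        have ht0 : 0 ≤ t := le_of_lt ht.1
        simpa [norm_smul, abs_of_nonneg ht0, mul_comm] using this
      have hg0 : (0:ℝ) ≤ ‖g‖ := norm_nonneg _
      calc |L (h + t • g) g - L h g| ≤ (b * (t * ‖g‖)) * ‖g‖ :=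
            h1.trans (mul_le_mul_of_nonneg_right h2 hg0)
        _ = b * ‖g‖ ^ 2 * t := by ring
    have := intervalIntegral.norm_integral_le_of_norm_le
      (g := fun t : ℝ => b * ‖g‖ ^ 2 * t)
      (f := fun t : ℝ => L (h + t • g) g - L h g)
      (μ := volume) (a := 0) (b := 1)
      (by norm_num) (ae_of_all _ (by
        intro t ht
        simpa [Real.norm_eq_abs] using
          hbound t (by rw [Set.uIoc_of_le (by norm_num : (0:ℝ) ≤ 1)]; exact ht)))
      ((continuous_const.mul continuous_id).intervalIntegrable 0 1)
    rw [hFTC] at this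
    have hint : (∫ t in (0:ℝ)..1, b * ‖g‖ ^ 2 * t) = b / 2 * ‖g‖ ^ 2 := by
      rw [intervalIntegral.integral_const_mul, integral_id]
      ring
    rw [hint] at this
    calc |f (h + g) - f h - L h g| = ‖f (h + g) - f h - L h g‖ := (Real.norm_eq_abs _).symm
      _ ≤ |b / 2 * ‖g‖ ^ 2| := this.trans (le_abs_self _)
      _ = b / 2 * ‖g‖ ^ 2 := abs_of_nonneg (by positivity)
  -- big set pointwise bound
  have keybig : ∀ g : H, |f (h + g) - f h - L h g| ≤ 2 * a * ‖g‖ := by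
    intro g
    have h1 : |f (h + g) - f h| ≤ a * ‖g‖ := by
      have := Convex.norm_image_sub_le_of_norm_fderiv_le (fun z _ => hfd z) (fun z _ => hnormL z)
        convex_univ (Set.mem_univ h) (Set.mem_univ (h + g))
      simpa [Real.norm_eq_abs] using this
    have h2 : |L h g| ≤ a * ‖g‖ := by
      have := (L h).le_opNorm g
      have := le_trans this (mul_le_mul_of_nonneg_right (hnormL h) (norm_nonneg g))
      simpa [Real.norm_eq_abs] using this
    calc |f (h + g) - f h - L h g| ≤ |f (h + g) - f h| + |L h g| := abs_sub _ _
      _ ≤ a * ‖g‖ + a * ‖g‖ := add_le_add h1 h2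
      _ = 2 * a * ‖g‖ := by ring
  have hmeasS : MeasurableSet {g : H | ‖g‖ ≤ 1} :=
    measurableSet_le continuous_norm.measurable measurable_const
  have hcompl : {g : H | ‖g‖ ≤ 1}ᶜ = {g : H | 1 < ‖g‖} := by
    ext g; simp [not_le]
  simp only [hinner]
  calc ∫⁻ g, ENNReal.ofReal |f (h + g) - f h - L h g| ∂μ
      = (∫⁻ g in {g : H | ‖g‖ ≤ 1}, ENNReal.ofReal |f (h + g) - f h - L h g| ∂μ)
        + ∫⁻ g in {g : H | 1 < ‖g‖}, ENNReal.ofReal |f (h + g) - f h - L h g| ∂μ := by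
        rw [← hcompl, lintegral_add_compl _ hmeasS]
    _ ≤ ENNReal.ofReal (b / 2) * ENNReal.ofReal C
        + ENNReal.ofReal (2 * a) * ENNReal.ofReal C := by
        gcongr
        · calc ∫⁻ g in {g : H | ‖g‖ ≤ 1}, ENNReal.ofReal |f (h + g) - f h - L h g| ∂μ
              ≤ ∫⁻ g in {g : H | ‖g‖ ≤ 1},
                  ENNReal.ofReal (b / 2) * ENNReal.ofReal (‖g‖ ^ 2) ∂μ := by
                refine setLIntegral_mono' hmeasS fun g _ => ?_
                rw [← ENNReal.ofReal_mul (by positivity)]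
                exact ENNReal.ofReal_le_ofReal (key g)
            _ = ENNReal.ofReal (b / 2)
                * ∫⁻ g in {g : H | ‖g‖ ≤ 1}, ENNReal.ofReal (‖g‖ ^ 2) ∂μ :=
                lintegral_const_mul' _ _ ENNReal.ofReal_ne_top
            _ ≤ ENNReal.ofReal (b / 2) * ENNReal.ofReal C := by gcongr
        · calc ∫⁻ g in {g : H | 1 < ‖g‖}, ENNReal.ofReal |f (h + g) - f h - L h g| ∂μ
              ≤ ∫⁻ g in {g : H | 1 < ‖g‖},
                  ENNReal.ofReal (2 * a) * ENNReal.ofReal ‖g‖ ∂μ := by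
                refine setLIntegral_mono' (by rw [← hcompl]; exact hmeasS.compl) fun g _ => ?_
                rw [← ENNReal.ofReal_mul (by positivity)]
                exact ENNReal.ofReal_le_ofReal (keybig g)
            _ = ENNReal.ofReal (2 * a)
                * ∫⁻ g in {g : H | 1 < ‖g‖}, ENNReal.ofReal ‖g‖ ∂μ :=
                lintegral_const_mul' _ _ ENNReal.ofReal_ne_top
            _ ≤ ENNReal.ofReal (2 * a) * ENNReal.ofReal C := by gcongr
    _ = ENNReal.ofReal (C * (2 * a + b / 2)) := by
        rw [← ENNReal.ofReal_mul (by positivity), ← ENNReal.ofReal_mul (by positivity),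
          ← ENNReal.ofReal_add (by positivity) (by positivity)]
        congr 1
        ring
end

section
/- Let H be a separable real Hilbert space and let μ be a Borel measure on H with μ({0}) = 0 satisfying, for some constant C ≥ 0, the moment bounds ∫_{{b : ‖b‖ ≤ 1}} ‖b‖² dμ(b) ≤ C and ∫_{{b : ‖b‖ > 1}} ‖b‖ dμ(b) ≤ C. Let f : H → ℝ be twice continuously Fréchet differentiable with bounded first and second derivatives, and set T_f(g,b) := f(g+b) − f(g) − ⟨Df(g), b⟩. Then for all g, h ∈ H, ∫_H | T_f(g,b) − T_f(h,b) | dμ(b) ≤ 2C · ( sup_{‖b‖ ≤ 1} ‖D²f(g+b) − D²f(h+b)‖ + ‖D²f‖_∞ · ‖g − h‖ ), where ‖D²f‖_∞ = sup_{x∈H} ‖D²f(x)‖ and the norms of second derivatives are operator norms. -/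
open MeasureTheory
open scoped ENNReal RealInnerProductSpace

private theorem trans_hasFDerivAt {H E : Type*} [NormedAddCommGroup H] [NormedSpace ℝ H]
    [NormedAddCommGroup E] [NormedSpace ℝ E]
    (F : H → E) (hF1 : Differentiable ℝ F) (c x : H) :
    HasFDerivAt (fun y => F (c + y)) (fderiv ℝ F (c + x)) x := by
  have h1 := (hF1 (c + x)).hasFDerivAt
  have h2 : HasFDerivAt (fun y : H => c + y) (ContinuousLinearMap.id ℝ H) x :=
    (hasFDerivAt_id x).const_add c
  have h3 := h1.comp x h2
  rw [ContinuousLinearMap.comp_id] at h3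
  exact h3

set_option maxHeartbeats 1000000 in
/-- **Difference of Taylor remainders integral estimate (Lemma 8.3).**
Let `H` be a separable real Hilbert space and `μ` a Borel measure on `H` with
`μ {0} = 0`, `∫_{‖b‖ ≤ 1} ‖b‖² dμ ≤ C` and `∫_{‖b‖ > 1} ‖b‖ dμ ≤ C`. If `f : H → ℝ`
is twice continuously Fréchet differentiable with bounded first and second
derivatives, then with `T_f(g,b) := f(g+b) - f(g) - ⟪Df(g), b⟫` one has, for all
`g h ∈ H`,
`∫_H |T_f(g,b) - T_f(h,b)| dμ(b)
  ≤ 2C * ( sup_{‖b‖ ≤ 1} ‖D²f(g+b) - D²f(h+b)‖ + ‖D²f‖_∞ * ‖g - h‖ )`. -/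
theorem taylor_remainder_difference_integral_le
    {H : Type*} [NormedAddCommGroup H] [InnerProductSpace ℝ H] [CompleteSpace H]
    [SecondCountableTopology H] [MeasurableSpace H] [BorelSpace H]
    (μ : Measure H) (hzero : μ {0} = 0)
    (C : ℝ) (hC : 0 ≤ C)
    (hsmall : ∫⁻ b in {b : H | ‖b‖ ≤ 1}, ENNReal.ofReal (‖b‖ ^ 2) ∂μ ≤ ENNReal.ofReal C)
    (hbig : ∫⁻ b in {b : H | 1 < ‖b‖}, ENNReal.ofReal ‖b‖ ∂μ ≤ ENNReal.ofReal C)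
    (f : H → ℝ) (hf : ContDiff ℝ 2 f)
    (a bnd : ℝ)
    (ha : ∀ x : H, ‖gradient f x‖ ≤ a)
    (hbnd : ∀ x : H, ‖fderiv ℝ (fderiv ℝ f) x‖ ≤ bnd)
    (Tf : H → H → ℝ)
    (hTf : ∀ g b : H, Tf g b = f (g + b) - f g - ⟪gradient f g, b⟫) :
    ∀ g h : H,
      ∫⁻ b, ENNReal.ofReal |Tf g b - Tf h b| ∂μ
        ≤ ENNReal.ofReal (2 * C *
            ((⨆ b : {b : H // ‖b‖ ≤ 1},
                ‖fderiv ℝ (fderiv ℝ f) (g + (b : H)) - fderiv ℝ (fderiv ℝ f) (h + (b : H))‖)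
              + (⨆ x : H, ‖fderiv ℝ (fderiv ℝ f) x‖) * ‖g - h‖)) := by
  intro g h
  set F := fderiv ℝ f with hFdef
  set F' := fderiv ℝ (fderiv ℝ f) with hF'def
  have hf1 : Differentiable ℝ f := hf.differentiable (by norm_num)
  have hFc : ContDiff ℝ 1 F := hf.fderiv_right (le_refl _)
  have hF1 : Differentiable ℝ F := hFc.differentiable one_ne_zero
  have hF'eq : ∀ x : H, fderiv ℝ F x = F' x := fun x => rfl
  have hinner : ∀ x b : H, ⟪gradient f x, b⟫ = F x b := fun x b => by
    simp [gradient, InnerProductSpace.toDual_symm_apply, hFdef]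
  set S := (⨆ b : {b : H // ‖b‖ ≤ 1}, ‖F' (g + (b : H)) - F' (h + (b : H))‖) with hSdef
  set M := (⨆ x : H, ‖F' x‖) with hMdef
  have hbddS : BddAbove (Set.range fun b : {b : H // ‖b‖ ≤ 1} =>
      ‖F' (g + (b : H)) - F' (h + (b : H))‖) := by
    refine ⟨2 * bnd, ?_⟩
    rintro _ ⟨b, rfl⟩
    exact (norm_sub_le (F' (g + (b : H))) (F' (h + (b : H)))).trans
      (by linarith [hbnd (g + (b : H)), hbnd (h + (b : H))])
  have hbddM : BddAbove (Set.range fun x : H => ‖F' x‖) :=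
    ⟨bnd, by rintro _ ⟨x, rfl⟩; exact hbnd x⟩
  have hS0 : 0 ≤ S := by
    have h0 := le_ciSup hbddS ⟨(0 : H), by simp⟩
    exact le_trans (by positivity) h0
  have hM0 : 0 ≤ M := le_trans (by positivity) (le_ciSup hbddM 0)
  have hMle : ∀ x : H, ‖F' x‖ ≤ M := fun x => le_ciSup hbddM x
  have hSle : ∀ x : H, ‖x‖ ≤ 1 → ‖F' (g + x) - F' (h + x)‖ ≤ S := fun x hx =>
    le_ciSup hbddS ⟨x, hx⟩
  -- the auxiliary functions
  set χ : H → (H →L[ℝ] ℝ) := fun x => F (g + x) - F (h + x) - (F g - F h) with hχdef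
  set ψ : H → ℝ := fun x => f (g + x) - f (h + x) - (F g - F h) x with hψdef
  have hχ : ∀ x : H, HasFDerivAt χ (F' (g + x) - F' (h + x)) x := fun x =>
    ((trans_hasFDerivAt F hF1 g x).sub (trans_hasFDerivAt F hF1 h x)).sub_const (F g - F h)
  have hψ : ∀ x : H, HasFDerivAt ψ (χ x) x := fun x =>
    ((trans_hasFDerivAt f hf1 g x).sub (trans_hasFDerivAt f hf1 h x)).sub
      ((F g - F h).hasFDerivAt)
  have hχ0 : χ 0 = 0 := by simp [hχdef]
  have hψ0 : ψ 0 = f g - f h := by simp [hψdef]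
  -- bound on χ on the unit ball
  have hχle : ∀ x : H, ‖x‖ ≤ 1 → ‖χ x‖ ≤ S * ‖x‖ := by
    intro x hx
    have key : ‖χ x - χ 0‖ ≤ S * ‖x - 0‖ :=
      (convex_closedBall (0 : H) 1).norm_image_sub_le_of_norm_fderiv_le
        (fun y _ => (hχ y).differentiableAt)
        (fun y hy => by
          rw [(hχ y).fderiv]
          exact hSle y (by simpa using hy))
        (Metric.mem_closedBall.mpr (by simp))
        (Metric.mem_closedBall.mpr (by simpa using hx))
    simpa [hχ0] using key
  -- pointwise bound for small b
  have hsmallpt : ∀ b : H, ‖b‖ ≤ 1 → |ψ b - ψ 0| ≤ S * ‖b‖ ^ 2 := by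
    intro b hb
    have key : ‖ψ b - ψ 0‖ ≤ S * ‖b‖ * ‖b - 0‖ :=
      (convex_closedBall (0 : H) ‖b‖).norm_image_sub_le_of_norm_fderiv_le
        (fun y _ => (hψ y).differentiableAt)
        (fun y hy => by
          rw [(hψ y).fderiv]
          have hy' : ‖y‖ ≤ ‖b‖ := by simpa using hy
          calc ‖χ y‖ ≤ S * ‖y‖ := hχle y (hy'.trans hb)
            _ ≤ S * ‖b‖ := by nlinarith)
        (Metric.mem_closedBall.mpr (by simp))
        (Metric.mem_closedBall.mpr (by simp))
    calc |ψ b - ψ 0| = ‖ψ b - ψ 0‖ := rfl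
      _ ≤ S * ‖b‖ * ‖b - 0‖ := key
      _ = S * ‖b‖ ^ 2 := by rw [sub_zero]; ring
  -- global Lipschitz bound on F
  have hFlip : ∀ x y : H, ‖F x - F y‖ ≤ M * ‖x - y‖ := fun x y =>
    convex_univ.norm_image_sub_le_of_norm_fderiv_le (f := F) (C := M)
      (fun z _ => hF1 z) (fun z _ => hMle z) (Set.mem_univ y) (Set.mem_univ x)
  have hχbig : ∀ x : H, ‖χ x‖ ≤ 2 * M * ‖g - h‖ := by
    intro x
    have h1 : ‖F (g + x) - F (h + x)‖ ≤ M * ‖g - h‖ := by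
      have := hFlip (g + x) (h + x)
      simpa [add_sub_add_right_eq_sub] using this
    have h2 : ‖F g - F h‖ ≤ M * ‖g - h‖ := hFlip g h
    calc ‖χ x‖ ≤ ‖F (g + x) - F (h + x)‖ + ‖F g - F h‖ := norm_sub_le _ _
      _ ≤ 2 * M * ‖g - h‖ := by linarith
  -- pointwise bound for big b
  have hbigpt : ∀ b : H, |ψ b - ψ 0| ≤ 2 * M * ‖g - h‖ * ‖b‖ := by
    intro b
    have key : ‖ψ b - ψ 0‖ ≤ 2 * M * ‖g - h‖ * ‖b - 0‖ :=
      convex_univ.norm_image_sub_le_of_norm_fderiv_le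
        (fun y _ => (hψ y).differentiableAt)
        (fun y _ => by rw [(hψ y).fderiv]; exact hχbig y)
        (Set.mem_univ (0 : H)) (Set.mem_univ b)
    simpa using key
  -- link with Tf
  have hlink : ∀ b : H, Tf g b - Tf h b = ψ b - ψ 0 := by
    intro b
    simp only [hTf, hinner, hψdef, hψ0, ContinuousLinearMap.sub_apply, map_zero, add_zero]
    ring
  -- split the integral
  have hsmeas : MeasurableSet {b : H | ‖b‖ ≤ 1} :=
    (isClosed_le continuous_norm continuous_const).measurableSet
  have hcompl : {b : H | ‖b‖ ≤ 1}ᶜ = {b : H | 1 < ‖b‖} := by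
    ext b; simp [not_le]
  have h1 : ∫⁻ b in {b : H | ‖b‖ ≤ 1}, ENNReal.ofReal |Tf g b - Tf h b| ∂μ
      ≤ ENNReal.ofReal (S * C) := by
    calc ∫⁻ b in {b : H | ‖b‖ ≤ 1}, ENNReal.ofReal |Tf g b - Tf h b| ∂μ
        ≤ ∫⁻ b in {b : H | ‖b‖ ≤ 1}, ENNReal.ofReal S * ENNReal.ofReal (‖b‖ ^ 2) ∂μ := by
          refine setLIntegral_mono (by fun_prop) fun x hx => ?_
          rw [← ENNReal.ofReal_mul hS0]
          exact ENNReal.ofReal_le_ofReal (by rw [hlink]; exact hsmallpt x hx)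
      _ = ENNReal.ofReal S * ∫⁻ b in {b : H | ‖b‖ ≤ 1}, ENNReal.ofReal (‖b‖ ^ 2) ∂μ :=
          lintegral_const_mul' _ _ ENNReal.ofReal_ne_top
      _ ≤ ENNReal.ofReal S * ENNReal.ofReal C := mul_le_mul_right hsmall _
      _ = ENNReal.ofReal (S * C) := (ENNReal.ofReal_mul hS0).symm
  have h2 : ∫⁻ b in {b : H | 1 < ‖b‖}, ENNReal.ofReal |Tf g b - Tf h b| ∂μ
      ≤ ENNReal.ofReal (2 * M * ‖g - h‖ * C) := by
    have h2M : 0 ≤ 2 * M * ‖g - h‖ :=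
      mul_nonneg (by linarith) (norm_nonneg _)
    calc ∫⁻ b in {b : H | 1 < ‖b‖}, ENNReal.ofReal |Tf g b - Tf h b| ∂μ
        ≤ ∫⁻ b in {b : H | 1 < ‖b‖},
            ENNReal.ofReal (2 * M * ‖g - h‖) * ENNReal.ofReal ‖b‖ ∂μ := by
          refine setLIntegral_mono (by fun_prop) fun x _ => ?_
          rw [← ENNReal.ofReal_mul h2M]
          exact ENNReal.ofReal_le_ofReal (by rw [hlink]; exact hbigpt x)
      _ = ENNReal.ofReal (2 * M * ‖g - h‖) *
            ∫⁻ b in {b : H | 1 < ‖b‖}, ENNReal.ofReal ‖b‖ ∂μ :=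
          lintegral_const_mul' _ _ ENNReal.ofReal_ne_top
      _ ≤ ENNReal.ofReal (2 * M * ‖g - h‖) * ENNReal.ofReal C := mul_le_mul_right hbig _
      _ = ENNReal.ofReal (2 * M * ‖g - h‖ * C) := (ENNReal.ofReal_mul h2M).symm
  calc ∫⁻ b, ENNReal.ofReal |Tf g b - Tf h b| ∂μ
      = (∫⁻ b in {b : H | ‖b‖ ≤ 1}, ENNReal.ofReal |Tf g b - Tf h b| ∂μ)
        + ∫⁻ b in {b : H | 1 < ‖b‖}, ENNReal.ofReal |Tf g b - Tf h b| ∂μ := by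
        rw [← lintegral_add_compl (fun b => ENNReal.ofReal |Tf g b - Tf h b|) hsmeas, hcompl]
    _ ≤ ENNReal.ofReal (S * C) + ENNReal.ofReal (2 * M * ‖g - h‖ * C) := add_le_add h1 h2
    _ = ENNReal.ofReal (S * C + 2 * M * ‖g - h‖ * C) :=
        (ENNReal.ofReal_add (mul_nonneg hS0 hC)
          (mul_nonneg (mul_nonneg (by linarith) (norm_nonneg _)) hC)).symm
    _ ≤ ENNReal.ofReal (2 * C * (S + M * ‖g - h‖)) := by
        apply ENNReal.ofReal_le_ofReal
        nlinarith [norm_nonneg (g - h)]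
end

section
/- Let V be a separable real Hilbert space and let (A_m)_{m∈ℕ} be a sequence of continuous linear operators A_m : V → V converging strongly to 0, i.e. ‖A_m x‖ → 0 as m → ∞ for every x ∈ V. Let (Ω, Σ, P) be a probability space and let (B_n)_{n∈ℕ} be a sequence of V-valued random variables that is uniformly bounded (there exists c > 0 with ‖B_n‖ ≤ c almost surely for every n) and tight (for every ε > 0 there exists a compact set K ⊆ V with P(B_n ∉ K) < ε for every n). Then for every p > 0, lim_{m→∞} sup_{n∈ℕ} E[ ‖A_m B_n‖^p ] = 0. -/
open MeasureTheory Filter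
open scoped ENNReal Topology

/-- **Uniform moment convergence (Appendix Lemma).**
Let `V` be a separable real Hilbert space, `(A m)` a sequence of bounded linear
operators on `V` converging strongly to `0`, and `(B n)` a sequence of `V`-valued
random variables on a probability space `(Ω, P)` which is uniformly bounded
(`‖B n‖ ≤ c` a.s.) and tight. Then for every `p > 0`,
`lim_{m→∞} sup_n E[‖A m (B n)‖^p] = 0`. -/
theorem sup_moment_tendsto_zero_of_strong_convergence
    {V : Type*} [NormedAddCommGroup V] [InnerProductSpace ℝ V] [CompleteSpace V]
    [SecondCountableTopology V] [MeasurableSpace V] [BorelSpace V]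
    {Ω : Type*} [MeasurableSpace Ω] (P : Measure Ω) [IsProbabilityMeasure P]
    (A : ℕ → V →L[ℝ] V)
    (hA : ∀ x : V, Tendsto (fun m : ℕ => A m x) atTop (𝓝 0))
    (B : ℕ → Ω → V) (hBmeas : ∀ n, Measurable (B n))
    (c : ℝ) (hc : 0 < c)
    (hbound : ∀ n, ∀ᵐ ω ∂P, ‖B n ω‖ ≤ c)
    (htight : ∀ ε : ℝ, 0 < ε → ∃ K : Set V, IsCompact K ∧
      ∀ n, P {ω | B n ω ∉ K} < ENNReal.ofReal ε) :
    ∀ p : ℝ, 0 < p →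
      Tendsto (fun m : ℕ => ⨆ n : ℕ, ∫ ω, ‖A m (B n ω)‖ ^ p ∂P) atTop (𝓝 0) := by
  -- uniform operator norm bound via Banach–Steinhaus
  obtain ⟨C, hC⟩ : ∃ C, ∀ m, ‖A m‖ ≤ C := by
    apply banach_steinhaus (g := A)
    intro x
    obtain ⟨b, hb⟩ := ((hA x).norm.isBoundedUnder_le).bddAbove_range
    exact ⟨b, fun m => hb (Set.mem_range_self m)⟩
  set C' : ℝ := max C 1 with hC'def
  have hC'pos : 0 < C' := lt_of_lt_of_le one_pos (le_max_right _ _)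
  have hC' : ∀ m, ‖A m‖ ≤ C' := fun m => (hC m).trans (le_max_left _ _)
  intro p hp
  rw [NormedAddCommGroup.tendsto_nhds_zero]
  intro ε hε
  have hε2 : (0:ℝ) < ε / 2 := by linarith
  -- tightness parameter
  set q : ℝ := (C' * c) ^ p with hqdef
  have hq0 : 0 ≤ q := Real.rpow_nonneg (by positivity) _
  set εK : ℝ := (ε / 2) / (q + 1) with hεKdef
  have hεK : 0 < εK := by positivity
  obtain ⟨K, hK, hKP⟩ := htight εK hεK
  -- uniform convergence on K
  set δ : ℝ := (ε / 2) ^ p⁻¹ with hδdef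
  have hδ : 0 < δ := Real.rpow_pos_of_pos hε2 _
  have hδp : δ ^ p = ε / 2 := Real.rpow_inv_rpow hε2.le hp.ne'
  have key : ∀ᶠ m in atTop, ∀ x ∈ K, ‖A m x‖ < δ := by
    set r : ℝ := δ / (2 * C') with hrdef
    have hr : 0 < r := by positivity
    obtain ⟨t, htK, hcov⟩ := hK.elim_nhds_subcover (fun x => Metric.ball x r)
      (fun x _ => Metric.ball_mem_nhds x hr)
    have hev : ∀ᶠ m in atTop, ∀ y ∈ t, ‖A m y‖ < δ / 2 := by
      rw [eventually_all_finset]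
      intro y _
      have := (hA y).norm
      rw [norm_zero] at this
      exact this.eventually_lt_const (by positivity)
    filter_upwards [hev] with m hm x hx
    obtain ⟨y, hyt, hxy⟩ := Set.mem_iUnion₂.mp (hcov hx)
    have h1 : ‖A m x - A m y‖ < δ / 2 := by
      rw [← map_sub]
      calc ‖A m (x - y)‖ ≤ ‖A m‖ * ‖x - y‖ := (A m).le_opNorm _
        _ ≤ C' * ‖x - y‖ := by
            exact mul_le_mul_of_nonneg_right (hC' m) (norm_nonneg _)
        _ < C' * r := by
            apply mul_lt_mul_of_pos_left _ hC'pos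
            rw [← dist_eq_norm]; exact Metric.mem_ball.mp hxy
        _ = δ / 2 := by rw [hrdef]; field_simp
    calc ‖A m x‖ = ‖(A m x - A m y) + A m y‖ := by rw [sub_add_cancel]
      _ ≤ ‖A m x - A m y‖ + ‖A m y‖ := norm_add_le _ _
      _ < δ / 2 + δ / 2 := add_lt_add h1 (hm y hyt)
      _ = δ := by ring
  filter_upwards [key] with m hm
  -- bound each integral
  have hbound' : ∀ n, ∫ ω, ‖A m (B n ω)‖ ^ p ∂P ≤ ε / 2 + q * εK := by
    intro n
    set S : Set Ω := {ω | B n ω ∉ K} with hSdef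
    have hSmeas : MeasurableSet S := (hBmeas n) hK.isClosed.measurableSet.compl
    have hgint : Integrable (fun ω => ε / 2 + S.indicator (fun _ => q) ω) P :=
      (integrable_const _).add ((integrable_const q).indicator hSmeas)
    have hle : ∫ ω, ‖A m (B n ω)‖ ^ p ∂P
        ≤ ∫ ω, (ε / 2 + S.indicator (fun _ => q) ω) ∂P := by
      apply integral_mono_of_nonneg
      · exact Filter.Eventually.of_forall fun ω => Real.rpow_nonneg (norm_nonneg _) _
      · exact hgint
      · filter_upwards [hbound n] with ω hω
        by_cases hωK : B n ω ∈ K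
        · have h1 : ‖A m (B n ω)‖ ^ p ≤ δ ^ p :=
            Real.rpow_le_rpow (norm_nonneg _) (hm _ hωK).le hp.le
          have h2 : (0:ℝ) ≤ S.indicator (fun _ => q) ω :=
            Set.indicator_nonneg (fun _ _ => hq0) ω
          rw [hδp] at h1; linarith
        · have h1 : ‖A m (B n ω)‖ ≤ C' * c := by
            calc ‖A m (B n ω)‖ ≤ ‖A m‖ * ‖B n ω‖ := (A m).le_opNorm _
              _ ≤ C' * c := mul_le_mul (hC' m) hω (norm_nonneg _) hC'pos.le
          have h2 : ‖A m (B n ω)‖ ^ p ≤ q :=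
            Real.rpow_le_rpow (norm_nonneg _) h1 hp.le
          have h3 : S.indicator (fun _ => q) ω = q := Set.indicator_of_mem (show ω ∈ S from hωK) _
          rw [h3]; linarith
    have hint : ∫ ω, (ε / 2 + S.indicator (fun _ => q) ω) ∂P
        = ε / 2 + q * (P S).toReal := by
      rw [integral_add (integrable_const _) ((integrable_const q).indicator hSmeas),
        integral_const, integral_indicator_const _ hSmeas]
      simp [mul_comm]
      exact Or.inl rfl
    have hPS : (P S).toReal ≤ εK :=
      ENNReal.toReal_le_of_le_ofReal hεK.le (hKP n).le
    calc ∫ ω, ‖A m (B n ω)‖ ^ p ∂P ≤ ε / 2 + q * (P S).toReal := hle.trans_eq hint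
      _ ≤ ε / 2 + q * εK := by nlinarith
  have hsup_le : (⨆ n, ∫ ω, ‖A m (B n ω)‖ ^ p ∂P) ≤ ε / 2 + q * εK :=
    ciSup_le hbound'
  have hsup_nonneg : (0:ℝ) ≤ ⨆ n, ∫ ω, ‖A m (B n ω)‖ ^ p ∂P :=
    Real.iSup_nonneg fun n =>
      integral_nonneg fun ω => Real.rpow_nonneg (norm_nonneg _) _
  rw [Real.norm_eq_abs, abs_of_nonneg hsup_nonneg]
  have : q * εK < ε / 2 := by
    have h1 : q * εK < (q + 1) * εK := mul_lt_mul_of_pos_right (by linarith) hεK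
    have h2 : (q + 1) * εK = ε / 2 := by
      rw [hεKdef]; field_simp
    linarith
  linarith
end
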